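/- arXiv:1204.4465 — 3 statements merged into one kernel-verified Lean document; each statement's English description precedes it below -/
import Mathlib

section
/- (Telescoping Lemma, Lemma 1) Let (Ω, μ) be a probability space with a filtration ℱ indexed by ℕ. Let L : ℕ → Ω → ℝ be a sequence of integrable random variables with L k nonnegative almost everywhere and L k measurable with respect to ℱ k for every k, and let f : ℕ → Ω → ℝ be a sequence of integrable random variables with f k measurable with respect to ℱ k for every k. Suppose there exist constants B > 0 and δ > 0 such that for every k, μ[L (k+1) − L k | ℱ k] ≤ B − δ · μ[f k | ℱ k] almost everywhere. Then limsup_{K→∞} (1/K) · ∑_{k=0}^{K−1} E[f k] ≤ B/δ, where E[·] denotes expectation (integral) with respect to μ. -/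
open MeasureTheory Filter

/-- **Telescoping Lemma (Lemma 1).** If `L k` is a nonnegative integrable Lyapunov process
adapted to the filtration `ℱ`, `f k` is an integrable adapted process, and the conditional
drift satisfies `μ[L (k+1) − L k | ℱ k] ≤ B − δ · μ[f k | ℱ k]` a.e. for constants
`B > 0`, `δ > 0`, then `limsup_{K→∞} (1/K) ∑_{k=0}^{K−1} E[f k] ≤ B / δ`. -/
theorem telescoping_lemma
    {Ω : Type*} {m : MeasurableSpace Ω} {μ : Measure Ω} [IsProbabilityMeasure μ]
    (ℱ : Filtration ℕ m)
    (L : ℕ → Ω → ℝ) (f : ℕ → Ω → ℝ)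
    (hLint : ∀ k, Integrable (L k) μ)
    (hLnonneg : ∀ k, 0 ≤ᵐ[μ] L k)
    (hLadapted : ∀ k, StronglyMeasurable[ℱ k] (L k))
    (hfint : ∀ k, Integrable (f k) μ)
    (hfadapted : ∀ k, StronglyMeasurable[ℱ k] (f k))
    (B δ : ℝ) (hB : 0 < B) (hδ : 0 < δ)
    (hdrift : ∀ k,
      μ[L (k + 1) - L k | ℱ k] ≤ᵐ[μ] fun ω => B - δ * (μ[f k | ℱ k]) ω) :
    limsup (fun K : ℕ => (1 / (K : ℝ)) * ∑ k ∈ Finset.range K, ∫ ω, f k ω ∂μ) atTop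
      ≤ B / δ := by
  set C : ℝ := ∫ ω, L 0 ω ∂μ with hC
  -- Step 1: expectation of the drift inequality
  have hstep : ∀ k, (∫ ω, L (k+1) ω ∂μ) - (∫ ω, L k ω ∂μ) ≤ B - δ * ∫ ω, f k ω ∂μ := by
    intro k
    have hsub : Integrable (L (k+1) - L k) μ := (hLint (k+1)).sub (hLint k)
    have hrhs : Integrable (fun ω => B - δ * (μ[f k | ℱ k]) ω) μ :=
      (integrable_const B).sub (integrable_condExp.const_mul δ)
    have hmono := integral_mono_ae integrable_condExp hrhs (hdrift k)
    have h1 : ∫ ω, (μ[L (k+1) - L k | ℱ k]) ω ∂μ = ∫ ω, (L (k+1) - L k) ω ∂μ :=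
      integral_condExp (ℱ.le k)
    have h2 : ∫ ω, (L (k+1) - L k) ω ∂μ = (∫ ω, L (k+1) ω ∂μ) - ∫ ω, L k ω ∂μ :=
      integral_sub (hLint (k+1)) (hLint k)
    have h3 : ∫ ω, (B - δ * (μ[f k | ℱ k]) ω) ∂μ = B - δ * ∫ ω, f k ω ∂μ := by
      rw [integral_sub (integrable_const B) (integrable_condExp.const_mul δ),
        integral_const, integral_const_mul, integral_condExp (ℱ.le k)]
      simp
    rw [h1, h2, h3] at hmono
    exact hmono
  -- Step 2: telescoping sum
  have hsum : ∀ K : ℕ, δ * ∑ k ∈ Finset.range K, ∫ ω, f k ω ∂μ ≤ K * B + C := by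
    intro K
    have ht : ∑ k ∈ Finset.range K,
        ((∫ ω, L (k+1) ω ∂μ) - ∫ ω, L k ω ∂μ) = (∫ ω, L K ω ∂μ) - C := by
      rw [Finset.sum_range_sub (fun k => ∫ ω, L k ω ∂μ)]
    have hle : ∑ k ∈ Finset.range K, ((∫ ω, L (k+1) ω ∂μ) - ∫ ω, L k ω ∂μ)
        ≤ ∑ k ∈ Finset.range K, (B - δ * ∫ ω, f k ω ∂μ) :=
      Finset.sum_le_sum fun k _ => hstep k
    have hLK : 0 ≤ ∫ ω, L K ω ∂μ := integral_nonneg_of_ae (hLnonneg K)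
    rw [ht] at hle
    rw [Finset.sum_sub_distrib, Finset.sum_const, Finset.card_range,
      ← Finset.mul_sum] at hle
    rw [nsmul_eq_mul] at hle
    nlinarith [hle]
  -- Step 3: bound the Cesàro averages
  have hbound : ∀ K : ℕ, 1 ≤ K →
      (1 / (K : ℝ)) * ∑ k ∈ Finset.range K, ∫ ω, f k ω ∂μ ≤ B / δ + C / δ / K := by
    intro K hK
    have hKpos : (0 : ℝ) < K := by exact_mod_cast hK
    have h := hsum K
    rw [one_div, inv_mul_le_iff₀ hKpos, div_div]
    have heq : (K:ℝ) * (B/δ + C/(δ*K)) = ((K:ℝ)*B + C)/δ := by field_simp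
    rw [heq, le_div_iff₀ hδ]
    nlinarith
  -- Step 4: pass to the limsup
  set u : ℕ → ℝ := fun K => (1 / (K : ℝ)) * ∑ k ∈ Finset.range K, ∫ ω, f k ω ∂μ with hu
  set g : ℕ → ℝ := fun K => B / δ + C / δ / K with hg
  have hgt : Tendsto g atTop (nhds (B / δ)) := by
    have := (tendsto_const_nhds (x := B / δ) (f := atTop (α := ℕ))).add
      (tendsto_const_div_atTop_nhds_zero_nat (C / δ))
    simpa using this
  have hev : ∀ᶠ K in atTop, u K ≤ g K := eventually_atTop.2 ⟨1, hbound⟩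
  have hgbdd : IsBoundedUnder (· ≤ ·) atTop g := hgt.isBoundedUnder_le
  have hubdd : IsBoundedUnder (· ≤ ·) atTop u := hgbdd.mono_le hev
  by_cases hc : IsCoboundedUnder (· ≤ ·) atTop u
  · calc limsup u atTop ≤ limsup g atTop := limsup_le_limsup hev hc hgbdd
      _ = B / δ := hgt.limsup_eq
  · -- degenerate case: the junk value of `limsup` is `0 ≤ B / δ`
    rw [limsup_eq, Real.sInf_of_not_bddBelow]
    · positivity
    · rintro ⟨b, hb⟩
      exact hc ⟨b, fun a ha => hb (eventually_map.mp ha)⟩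
end

section
/- (Deterministic analogue of Theorem 1, Cesàro bound Eq. (4)) Let F be a finite set, ε > 0, and q : F → ℝ with 0 < q f ≤ 1 for all f ∈ F. Let S be a nonempty set of functions y : F → ℝ with 0 ≤ y f ≤ 1 for all y ∈ S and all f, and suppose there exists ŷ ∈ S with ŷ f ≥ (1+ε) · q f for every f. Let d : ℕ → F → ℝ and e : ℕ → F → ℝ satisfy: d 0 f = 0 for all f; for every k, e(k+1) ∈ S and e(k+1) maximizes ∑_{f ∈ F} (d k f)⁺ · y f over all y ∈ S; and d(k+1) f = d k f + q f − e(k+1) f for all f. Then limsup_{K→∞} (1/K) · ∑_{k=0}^{K−1} ∑_{f ∈ F} (d k f)⁺ · q f ≤ (|F|/2)/ε. -/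
open Finset Filter

/-- **Deterministic analogue of Theorem 1 (Cesàro bound, Eq. (4)).** Under strict feasibility,
the debt-weighted maximizing policy satisfies
`limsup_{K→∞} (1/K) ∑_{k<K} ∑_f (d k f)⁺ q f ≤ (|F|/2)/ε`. -/
theorem cesaro_debt_bound
    {F : Type*} [Fintype F] (ε : ℝ) (hε : 0 < ε)
    (q : F → ℝ) (hq : ∀ f, 0 < q f ∧ q f ≤ 1)
    (S : Set (F → ℝ)) (hS : S.Nonempty)
    (hS01 : ∀ y ∈ S, ∀ f, 0 ≤ y f ∧ y f ≤ 1)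
    (hfeas : ∃ yhat ∈ S, ∀ f, (1 + ε) * q f ≤ yhat f)
    (d : ℕ → F → ℝ) (e : ℕ → F → ℝ)
    (hd0 : ∀ f, d 0 f = 0)
    (heS : ∀ k, e (k + 1) ∈ S)
    (hmax : ∀ k, ∀ y ∈ S,
      ∑ f : F, max (d k f) 0 * y f ≤ ∑ f : F, max (d k f) 0 * e (k + 1) f)
    (hrec : ∀ k f, d (k + 1) f = d k f + q f - e (k + 1) f) :
    limsup
      (fun K : ℕ => (1 / (K : ℝ)) * ∑ k ∈ Finset.range K, ∑ f : F, max (d k f) 0 * q f)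
      atTop
      ≤ ((Fintype.card F : ℝ) / 2) / ε := by
  obtain ⟨yhat, hyS, hyfeas⟩ := hfeas
  set W : ℕ → ℝ := fun k => ∑ f : F, max (d k f) 0 * q f with hWdef
  set V : ℕ → ℝ := fun k => ∑ f : F, (max (d k f) 0) ^ 2 with hVdef
  have hWnn : ∀ k, 0 ≤ W k := fun k =>
    Finset.sum_nonneg fun f _ => mul_nonneg (le_max_right _ _) (hq f).1.le
  have hVnn : ∀ k, 0 ≤ V k := fun k => Finset.sum_nonneg fun f _ => sq_nonneg _
  have hV0 : V 0 = 0 := by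
    simp [hVdef, hd0]
  -- key drift inequality
  have hstep : ∀ k, V (k + 1) ≤ V k - 2 * ε * W k + (Fintype.card F : ℝ) := by
    intro k
    have hE : (1 + ε) * W k ≤ ∑ f : F, max (d k f) 0 * e (k + 1) f := by
      calc (1 + ε) * W k = ∑ f : F, max (d k f) 0 * ((1 + ε) * q f) := by
            rw [hWdef]; rw [Finset.mul_sum]; apply Finset.sum_congr rfl; intro f _; ring
        _ ≤ ∑ f : F, max (d k f) 0 * yhat f :=
            Finset.sum_le_sum fun f _ =>
              mul_le_mul_of_nonneg_left (hyfeas f) (le_max_right _ _)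
        _ ≤ _ := hmax k yhat hyS
    have hpt : ∀ f : F, (max (d (k + 1) f) 0) ^ 2 ≤
        (max (d k f) 0) ^ 2 + 2 * max (d k f) 0 * (q f - e (k + 1) f) + 1 := by
      intro f
      have he01 := hS01 _ (heS k) f
      have hqf := hq f
      have hx1 : q f - e (k + 1) f ≤ 1 := by linarith [he01.1, hqf.2]
      have hx2 : -1 ≤ q f - e (k + 1) f := by linarith [he01.2, hqf.1]
      have key : (max (d (k + 1) f) 0) ^ 2 ≤
          (max (d k f) 0 + (q f - e (k + 1) f)) ^ 2 := by
        rw [hrec k f]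
        rcases le_total (d k f + q f - e (k + 1) f) 0 with h | h
        · rw [max_eq_right h]
          nlinarith [sq_nonneg (max (d k f) 0 + (q f - e (k + 1) f))]
        · rw [max_eq_left h]
          nlinarith [le_max_left (d k f) 0, le_max_right (d k f) 0]
      nlinarith [le_max_right (d k f) 0]
    calc V (k + 1) ≤ ∑ f : F,
          ((max (d k f) 0) ^ 2 + 2 * max (d k f) 0 * (q f - e (k + 1) f) + 1) :=
          Finset.sum_le_sum fun f _ => hpt f
      _ = V k + 2 * (W k - ∑ f : F, max (d k f) 0 * e (k + 1) f)
            + (Fintype.card F : ℝ) := by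
          have hsplit : ∑ f : F, 2 * max (d k f) 0 * (q f - e (k + 1) f)
              = 2 * (W k - ∑ f : F, max (d k f) 0 * e (k + 1) f) := by
            simp only [hWdef]
            rw [mul_sub, Finset.mul_sum, Finset.mul_sum, ← Finset.sum_sub_distrib]
            exact Finset.sum_congr rfl fun f _ => by ring
          rw [Finset.sum_add_distrib, Finset.sum_add_distrib, Finset.sum_const,
            Finset.card_univ, nsmul_eq_mul, mul_one, hsplit]
      _ ≤ V k - 2 * ε * W k + (Fintype.card F : ℝ) := by nlinarith [hWnn k]
  -- cumulative bound
  have hcum : ∀ K : ℕ, V K + 2 * ε * ∑ k ∈ Finset.range K, W k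
      ≤ (K : ℝ) * (Fintype.card F : ℝ) := by
    intro K
    induction K with
    | zero => simp [hV0]
    | succ K ih =>
        rw [Finset.sum_range_succ]
        push_cast
        have := hstep K
        nlinarith
  have hbound : ∀ K : ℕ, (1 / (K : ℝ)) * ∑ k ∈ Finset.range K, W k
      ≤ ((Fintype.card F : ℝ) / 2) / ε := by
    intro K
    rcases Nat.eq_zero_or_pos K with h | h
    · subst h
      simp
      positivity
    · have hK : (0 : ℝ) < K := by exact_mod_cast h
      have h1 := hcum K
      have h2 : ∑ k ∈ Finset.range K, W k ≤ (K : ℝ) * (Fintype.card F : ℝ) / (2 * ε) := by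
        rw [le_div_iff₀ (by positivity)]
        nlinarith [hVnn K]
      rw [div_div, one_div, inv_mul_le_iff₀ hK, ← mul_div_assoc]
      exact h2
  refine limsup_le_of_le ?_ (Filter.Eventually.of_forall hbound)
  exact isCoboundedUnder_le_of_le atTop fun K =>
    mul_nonneg (by positivity) (Finset.sum_nonneg fun k _ => hWnn k)
end

section
/- (Deterministic analogue of Theorem 1, fulfillment) Let F be a finite set, ε > 0, and q : F → ℝ with 0 < q f ≤ 1 for all f ∈ F. Let S be a nonempty set of functions y : F → ℝ with 0 ≤ y f ≤ 1 for all y ∈ S and all f, and suppose there exists ŷ ∈ S with ŷ f ≥ (1+ε) · q f for every f. Let d : ℕ → F → ℝ and e : ℕ → F → ℝ satisfy: d 0 f = 0 for all f; for every k, e(k+1) ∈ S and e(k+1) maximizes ∑_{f ∈ F} (d k f)⁺ · y f over all y ∈ S; and d(k+1) f = d k f + q f − e(k+1) f for all f. Then for every f ∈ F, liminf_{K→∞} (1/K) · ∑_{k=1}^{K} e k f ≥ q f; equivalently, limsup_{K→∞} d K f / K ≤ 0 for every f ∈ F. -/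
open Finset Filter

/-- **Deterministic analogue of Theorem 1 (fulfillment).** Under strict feasibility, the
debt-weighted maximizing policy fulfills every flow:
`liminf_{K→∞} (1/K) ∑_{k=1}^{K} e k f ≥ q f` for every `f`; equivalently,
`limsup_{K→∞} d K f / K ≤ 0` for every `f`. -/
theorem maximizing_policy_fulfills
    {F : Type*} [Fintype F] (ε : ℝ) (hε : 0 < ε)
    (q : F → ℝ) (hq : ∀ f, 0 < q f ∧ q f ≤ 1)
    (S : Set (F → ℝ)) (hS : S.Nonempty)
    (hS01 : ∀ y ∈ S, ∀ f, 0 ≤ y f ∧ y f ≤ 1)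
    (hfeas : ∃ yhat ∈ S, ∀ f, (1 + ε) * q f ≤ yhat f)
    (d : ℕ → F → ℝ) (e : ℕ → F → ℝ)
    (hd0 : ∀ f, d 0 f = 0)
    (heS : ∀ k, e (k + 1) ∈ S)
    (hmax : ∀ k, ∀ y ∈ S,
      ∑ f : F, max (d k f) 0 * y f ≤ ∑ f : F, max (d k f) 0 * e (k + 1) f)
    (hrec : ∀ k f, d (k + 1) f = d k f + q f - e (k + 1) f) :
    (∀ f : F,
        q f ≤ liminf (fun K : ℕ => (1 / (K : ℝ)) * ∑ k ∈ Finset.Icc 1 K, e k f) atTop)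
    ∧ (∀ f : F, limsup (fun K : ℕ => d K f / (K : ℝ)) atTop ≤ 0) := by
  classical
  obtain ⟨yhat, hyS, hyge⟩ := hfeas
  -- debt identity
  have hsum : ∀ K : ℕ, ∀ f, d K f = K * q f - ∑ k ∈ Finset.Icc 1 K, e k f := by
    intro K f
    induction K with
    | zero => simp [hd0]
    | succ K ih =>
      rw [hrec K f, ih, Finset.sum_Icc_succ_top (by omega : 1 ≤ K + 1)]
      push_cast; ring
  -- uniform bound on debts
  have key : ∃ C : ℝ, 0 ≤ C ∧ ∀ K : ℕ, ∀ f, d K f ≤ C := by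
    by_cases hF : Nonempty F
    · haveI := hF
      set V : ℕ → ℝ := fun k => ∑ f : F, (max (d k f) 0) ^ 2 with hV
      set W : ℕ → ℝ := fun k => ∑ f : F, max (d k f) 0 * q f with hW
      have hWnn : ∀ k, 0 ≤ W k := fun k =>
        Finset.sum_nonneg fun f _ => mul_nonneg (le_max_right _ _) (hq f).1.le
      set n : ℝ := (Fintype.card F : ℝ) with hn
      have hnpos : 0 < n := by
        simp only [hn, Nat.cast_pos, Fintype.card_pos]
      obtain ⟨f₀⟩ := hF
      set qmin : ℝ := Finset.univ.inf' Finset.univ_nonempty q with hqm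
      have hqminpos : 0 < qmin := by
        rw [hqm, Finset.lt_inf'_iff]
        exact fun f _ => (hq f).1
      have hqmin_le : ∀ f, qmin ≤ q f := fun f =>
        Finset.inf'_le q (Finset.mem_univ f)
      -- drift inequality
      have drift : ∀ k, V (k + 1) ≤ V k - 2 * ε * W k + n := by
        intro k
        have hpt : ∀ f : F, (max (d (k+1) f) 0) ^ 2 ≤
            (max (d k f) 0) ^ 2 + 2 * max (d k f) 0 * (q f - e (k+1) f) + 1 := by
          intro f
          have hdk : d (k+1) f = d k f + (q f - e (k+1) f) := by rw [hrec]; ring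
          set a := d k f
          set b := q f - e (k+1) f with hb
          have hb1 : b ≤ 1 := by
            have := (hS01 _ (heS k) f).1
            have := (hq f).2
            simp only [hb]; linarith
          have hb2 : -1 ≤ b := by
            have := (hS01 _ (heS k) f).2
            have := (hq f).1
            simp only [hb]; linarith
          have hm : a ≤ max a 0 := le_max_left _ _
          have hm0 : (0:ℝ) ≤ max a 0 := le_max_right _ _
          rw [hdk]
          rcases le_total (a + b) 0 with h | h
          · rw [max_eq_right h]
            nlinarith [sq_nonneg (max a 0 + b)]
          · rw [max_eq_left h]
            nlinarith [sq_nonneg (max a 0 + b)]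
        have hstep : V (k+1) ≤ V k + 2 * (∑ f : F, max (d k f) 0 * (q f - e (k+1) f)) + n := by
          have h9 := Finset.sum_le_sum (s := Finset.univ) (fun f _ => hpt f)
          simp only [Finset.sum_add_distrib, Finset.sum_const, Finset.card_univ,
            nsmul_eq_mul, mul_one] at h9
          have h10 : ∑ f : F, 2 * (max (d k f) 0) * (q f - e (k+1) f)
              = 2 * ∑ f : F, max (d k f) 0 * (q f - e (k+1) f) := by
            rw [Finset.mul_sum]; congr 1; ext f; ring
          simp only [hV, hn]
          linarith [h9, h10]
        have hdom : ∑ f : F, max (d k f) 0 * (q f - e (k+1) f) ≤ -ε * W k := by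
          have h1 : ∑ f : F, max (d k f) 0 * yhat f ≤
              ∑ f : F, max (d k f) 0 * e (k+1) f := hmax k yhat hyS
          have h2 : ∑ f : F, max (d k f) 0 * ((1 + ε) * q f) ≤
              ∑ f : F, max (d k f) 0 * yhat f :=
            Finset.sum_le_sum fun f _ =>
              mul_le_mul_of_nonneg_left (hyge f) (le_max_right _ _)
          have h3 : ∑ f : F, max (d k f) 0 * ((1 + ε) * q f)
              = (1 + ε) * W k := by
            rw [hW, Finset.mul_sum]; congr 1; ext f; ring
          have h4 : ∑ f : F, max (d k f) 0 * (q f - e (k+1) f)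
              = W k - ∑ f : F, max (d k f) 0 * e (k+1) f := by
            rw [hW, ← Finset.sum_sub_distrib]; congr 1; ext f; ring
          rw [h4]
          have : (1 + ε) * W k ≤ ∑ f : F, max (d k f) 0 * e (k+1) f := by
            rw [← h3]; exact le_trans h2 h1
          linarith
        calc V (k+1) ≤ V k + 2 * (∑ f : F, max (d k f) 0 * (q f - e (k+1) f)) + n := hstep
          _ ≤ V k + 2 * (-ε * W k) + n := by linarith [hdom]
          _ = V k - 2 * ε * W k + n := by ring
      -- bound V by induction
      set A : ℝ := n / (2 * ε * qmin) with hA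
      have hApos : 0 < A := div_pos hnpos (by positivity)
      set B : ℝ := n * A ^ 2 + 2 * n * A + n with hB
      have hBnn : 0 ≤ B := by positivity
      have hVB : ∀ k, V k ≤ B := by
        intro k
        induction k with
        | zero =>
          have : V 0 = 0 := by simp [hV, hd0]
          rw [this]; exact hBnn
        | succ k ih =>
          rcases le_or_gt n (2 * ε * W k) with h | h
          · calc V (k+1) ≤ V k - 2 * ε * W k + n := drift k
              _ ≤ V k := by linarith
              _ ≤ B := ih
          · -- small debts: each max (d k f) 0 ≤ A
            have hmA : ∀ f : F, max (d k f) 0 ≤ A := by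
              intro f
              have hterm : max (d k f) 0 * q f ≤ W k := by
                rw [hW]
                exact Finset.single_le_sum
                  (fun g _ => mul_nonneg (le_max_right _ _) (hq g).1.le)
                  (Finset.mem_univ f)
              have h5 : max (d k f) 0 * qmin ≤ max (d k f) 0 * q f :=
                mul_le_mul_of_nonneg_left (hqmin_le f) (le_max_right _ _)
              have h6 : max (d k f) 0 * qmin ≤ n / (2 * ε) := by
                have : W k ≤ n / (2 * ε) := by
                  rw [le_div_iff₀ (by positivity)]
                  nlinarith [hWnn k]
                linarith
              rw [hA, le_div_iff₀ (by positivity : (0:ℝ) < 2 * ε * qmin)]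
              rw [le_div_iff₀ (by positivity : (0:ℝ) < 2 * ε)] at h6
              nlinarith [h6]
            have hVk : V k ≤ n * A ^ 2 := by
              have : V k ≤ ∑ _f : F, A ^ 2 := by
                apply Finset.sum_le_sum
                intro f _
                have := hmA f
                have h0 : (0:ℝ) ≤ max (d k f) 0 := le_max_right _ _
                nlinarith
              simpa [hn, Finset.card_univ, mul_comm] using this
            have hWk : W k ≤ n * A := by
              have : W k ≤ ∑ _f : F, A := by
                apply Finset.sum_le_sum
                intro f _
                calc max (d k f) 0 * q f ≤ max (d k f) 0 * 1 :=
                      mul_le_mul_of_nonneg_left (hq f).2 (le_max_right _ _)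
                  _ = max (d k f) 0 := mul_one _
                  _ ≤ A := hmA f
              simpa [hn, Finset.card_univ, mul_comm] using this
            calc V (k+1) ≤ V k - 2 * ε * W k + n := drift k
              _ ≤ n * A ^ 2 + n := by nlinarith [hWnn k]
              _ ≤ B := by rw [hB]; nlinarith
      refine ⟨Real.sqrt B, Real.sqrt_nonneg _, fun K f => ?_⟩
      have h7 : (max (d K f) 0) ^ 2 ≤ V K := by
        simp only [hV]
        exact Finset.single_le_sum (fun g _ => sq_nonneg ((d K g) ⊔ 0)) (Finset.mem_univ f)
      have h8 : max (d K f) 0 ≤ Real.sqrt B :=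
        Real.le_sqrt_of_sq_le (le_trans h7 (hVB K))
      exact le_trans (le_max_left _ _) h8
    · exact ⟨0, le_refl 0, fun K f => absurd ⟨f⟩ hF⟩
  obtain ⟨C, hC0, hdC⟩ := key
  have htend : Tendsto (fun K : ℕ => C / (K : ℝ)) atTop (nhds 0) :=
    tendsto_const_div_atTop_nhds_zero_nat C
  constructor
  · -- liminf part
    intro f
    have hub : ∀ K : ℕ, 1 ≤ K →
        (1 / (K : ℝ)) * ∑ k ∈ Finset.Icc 1 K, e k f ≤ 1 := by
      intro K hK
      have hKpos : (0:ℝ) < K := by exact_mod_cast hK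
      have hsl : ∑ k ∈ Finset.Icc 1 K, e k f ≤ (K : ℝ) := by
        calc ∑ k ∈ Finset.Icc 1 K, e k f ≤ ∑ k ∈ Finset.Icc 1 K, 1 := by
              apply Finset.sum_le_sum
              intro k hk
              rcases Finset.mem_Icc.mp hk with ⟨hk1, _⟩
              obtain ⟨k', rfl⟩ : ∃ k', k = k' + 1 := ⟨k - 1, by omega⟩
              exact (hS01 _ (heS k') f).2
          _ = (K : ℝ) := by simp [Nat.card_Icc]
      rw [one_div, inv_mul_le_iff₀ hKpos, mul_one]
      exact hsl
    have hcob : IsCoboundedUnder (· ≥ ·) atTop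
        (fun K : ℕ => (1 / (K : ℝ)) * ∑ k ∈ Finset.Icc 1 K, e k f) := by
      apply isCoboundedUnder_ge_of_eventually_le atTop (x := (1:ℝ))
      filter_upwards [eventually_ge_atTop 1] with K hK using hub K hK
    have hev : ∀ c : ℝ, 0 < c → ∀ᶠ K : ℕ in atTop,
        q f - c ≤ (1 / (K : ℝ)) * ∑ k ∈ Finset.Icc 1 K, e k f := by
      intro c hc
      filter_upwards [eventually_ge_atTop 1, htend.eventually_lt_const hc]
        with K hK1 hKc
      have hKpos : (0:ℝ) < K := by exact_mod_cast hK1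
      have hid : (1 / (K : ℝ)) * ∑ k ∈ Finset.Icc 1 K, e k f
          = q f - d K f / K := by
        have := hsum K f
        field_simp
        linarith [this]
      rw [hid]
      have : d K f / K ≤ C / K := (div_le_div_iff_of_pos_right hKpos).mpr (hdC K f)
      linarith
    have : ∀ c : ℝ, 0 < c → q f - c ≤
        liminf (fun K : ℕ => (1 / (K : ℝ)) * ∑ k ∈ Finset.Icc 1 K, e k f) atTop := by
      intro c hc
      exact le_liminf_of_le hcob (hev c hc)
    apply le_of_forall_pos_le_add
    intro c hc
    linarith [this c hc]
  · -- limsup part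
    intro f
    have hlb : ∀ᶠ K : ℕ in atTop, (-1 : ℝ) ≤ d K f / K := by
      filter_upwards [eventually_ge_atTop 1] with K hK
      have hKpos : (0:ℝ) < K := by exact_mod_cast hK
      have hsl : ∑ k ∈ Finset.Icc 1 K, e k f ≤ (K : ℝ) := by
        calc ∑ k ∈ Finset.Icc 1 K, e k f ≤ ∑ k ∈ Finset.Icc 1 K, 1 := by
              apply Finset.sum_le_sum
              intro k hk
              rcases Finset.mem_Icc.mp hk with ⟨hk1, _⟩
              obtain ⟨k', rfl⟩ : ∃ k', k = k' + 1 := ⟨k - 1, by omega⟩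
              exact (hS01 _ (heS k') f).2
          _ = (K : ℝ) := by simp [Nat.card_Icc]
      have hd : d K f ≥ (K : ℝ) * q f - K := by
        rw [hsum K f]; linarith
      rw [le_div_iff₀ hKpos]
      nlinarith [(hq f).1, hd]
    have hcob : IsCoboundedUnder (· ≤ ·) atTop (fun K : ℕ => d K f / (K : ℝ)) :=
      isCoboundedUnder_le_of_eventually_le atTop hlb
    have : ∀ c : ℝ, 0 < c →
        limsup (fun K : ℕ => d K f / (K : ℝ)) atTop ≤ c := by
      intro c hc
      apply limsup_le_of_le hcob
      filter_upwards [eventually_ge_atTop 1, htend.eventually_lt_const hc]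
        with K hK1 hKc
      have hKpos : (0:ℝ) < K := by exact_mod_cast hK1
      have : d K f / K ≤ C / K := (div_le_div_iff_of_pos_right hKpos).mpr (hdC K f)
      linarith
    apply le_of_forall_pos_le_add
    intro c hc
    simpa using this c hc
end
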